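/- arXiv:2010.11597 — 2 statements merged into one kernel-verified Lean document; each statement's English description precedes it below -/
import Mathlib

section
/- Let κ be an uncountable regular cardinal such that μ^ω ≥ κ for some cardinal μ < κ, and let T be a κ-Kurepa subtree of ^{<κ}κ such that the cardinality of [T] is strictly greater than κ^{<κ}. Then the set [T] is not a continuous image of ^κκ. -/
open Cardinal Set

noncomputable section

namespace GBaire

universe u

/-- The underlying well-ordered set of the cardinal `κ`, i.e. the type of ordinals `< κ`. -/
abbrev K (κ : Cardinal.{u}) : Type u := κ.ord.ToType

/-- The set `^{<κ}κ` of all functions from a proper initial segment of `κ` to `κ`. -/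
abbrev PreFun (κ : Cardinal.{u}) : Type u := Σ α : K κ, ({β : K κ // β < α} → K κ)

variable (κ : Cardinal.{u})

/-- The restriction `x ↾ α` of a function `x ∈ ^κκ` to the initial segment determined by `α`. -/
def resT (x : K κ → K κ) (α : K κ) : PreFun κ := ⟨α, fun β => x β.1⟩

/-- The restriction of `s ∈ ^{<κ}κ` to (the minimum of its domain and) `γ`.  When
`γ ≤ s.1` this is the restriction `s ↾ γ`; otherwise it equals `s`. -/
def cut (s : PreFun κ) (γ : K κ) : PreFun κ :=
  ⟨min γ s.1, fun β => s.2 ⟨β.1, lt_of_lt_of_le β.2 (min_le_right _ _)⟩⟩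

/-- A subtree of `^{<κ}κ`: a set of elements of `^{<κ}κ` closed under restrictions
to smaller ordinals. -/
def IsSubtree (T : Set (PreFun κ)) : Prop :=
  ∀ s ∈ T, ∀ γ : K κ, γ < s.1 → cut κ s γ ∈ T

/-- The `α`-th level `T(α)` of `T`. -/
def level (T : Set (PreFun κ)) (α : K κ) : Set (PreFun κ) := {s ∈ T | s.1 = α}

/-- The set `[T]` of cofinal branches of `T`, i.e. all `x ∈ ^κκ` all of whose
restrictions lie in `T`. -/
def branches (T : Set (PreFun κ)) : Set (K κ → K κ) := {x | ∀ α : K κ, resT κ x α ∈ T}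

/-- `T` is a `κ`-Kurepa subtree of `^{<κ}κ`: a subtree all of whose levels are nonempty
of cardinality `< κ` and with at least `κ⁺` many cofinal branches. -/
def IsKurepa (T : Set (PreFun κ)) : Prop :=
  IsSubtree κ T ∧ (∀ α : K κ, (level κ T α).Nonempty ∧ #(level κ T α) < κ) ∧
    Order.succ κ ≤ #(branches κ T)

/-- The basic open set `N_s = {x ∈ ^κκ | s ⊆ x}`. -/
def Nbhd (s : PreFun κ) : Set (K κ → K κ) := {x | resT κ x s.1 = s}

/-- The topology of the generalized Baire space `^κκ`, generated by the sets `N_s`. -/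
def baire : TopologicalSpace (K κ → K κ) :=
  TopologicalSpace.generateFrom {U | ∃ s : PreFun κ, U = Nbhd κ s}

/-- `X` is a continuous image of `^κκ`: there is a continuous surjection from `^κκ`
onto `X` (with the subspace topology). -/
def IsContImage (X : Set (K κ → K κ)) : Prop :=
  letI := baire κ
  ∃ f : (K κ → K κ) → X, Continuous f ∧ Function.Surjective f

/-- `X` is a retract of `^κκ`: there is a continuous `r : ^κκ → ^κκ` with range
contained in `X` that is the identity on `X`. -/
def IsRetract (X : Set (K κ → K κ)) : Prop :=
  letI := baire κ
  ∃ r : (K κ → K κ) → (K κ → K κ),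
    Continuous r ∧ Set.range r ⊆ X ∧ ∀ x ∈ X, r x = x

/-- `y` is an isolated point of `Y ⊆ ^κκ`. -/
def IsIsolatedIn (Y : Set (K κ → K κ)) (y : K κ → K κ) : Prop :=
  y ∈ Y ∧ ∃ α : K κ, Nbhd κ (resT κ y α) ∩ Y = {y}

/-- `T` is slim: `|T(α)| ≤ |α|` for all sufficiently large `α < κ`. -/
def IsSlim (T : Set (PreFun κ)) : Prop :=
  ∃ α₀ : K κ, ∀ α : K κ, α₀ ≤ α → #(level κ T α) ≤ #{β : K κ // β < α}

/-- `C ⊆ κ` is closed: it contains every least upper bound of a nonempty subset of `C`. -/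
def ClosedIn (C : Set (K κ)) : Prop :=
  ∀ A ⊆ C, A.Nonempty → ∀ x : K κ, IsLUB A x → x ∈ C

/-- `C ⊆ κ` is unbounded in `κ`. -/
def UnboundedIn (C : Set (K κ)) : Prop := ∀ x : K κ, ∃ y ∈ C, x < y

/-- `S ⊆ κ` is stationary in `κ`: it meets every closed unbounded subset of `κ`. -/
def Stationary (S : Set (K κ)) : Prop :=
  ∀ C : Set (K κ), ClosedIn κ C → UnboundedIn κ C → (S ∩ C).Nonempty

/-- `T` is stationary slim: `|T(α)| ≤ |α|` for stationarily many `α < κ`. -/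
def StatSlim (T : Set (PreFun κ)) : Prop :=
  Stationary κ {α : K κ | #(level κ T α) ≤ #{β : K κ // β < α}}

/-- `α` is a limit ordinal (as an element of `κ`): it is neither the least element
nor a successor. -/
def IsLimitElt (α : K κ) : Prop :=
  (∃ β : K κ, β < α) ∧ ∀ β : K κ, β < α → ∃ γ : K κ, β < γ ∧ γ < α

/-- The boundary `∂T` of a subtree `T`: the minimal elements of `^{<κ}κ \ T`. -/
def boundary (T : Set (PreFun κ)) : Set (PreFun κ) :=
  {t | t ∉ T ∧ ∀ γ : K κ, γ < t.1 → cut κ t γ ∈ T}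

/-- `T` is superthin: for every limit ordinal `α < κ`, the set of elements of
`T ∪ ∂T` with domain `α` has cardinality `< κ`. -/
def IsSuperthin (T : Set (PreFun κ)) : Prop :=
  ∀ α : K κ, IsLimitElt κ α → #{s ∈ T ∪ boundary κ T | s.1 = α} < κ

/-- `T` is pruned: every element of `T` has a proper extension in `T`. -/
def IsPruned (T : Set (PreFun κ)) : Prop :=
  ∀ s ∈ T, ∃ t ∈ T, s.1 < t.1 ∧ cut κ t s.1 = s

/-- `T` is `<κ`-closed: the union of every (strictly increasing with respect to proper
end-extension) sequence of elements of `T` indexed by an ordinal `< κ` again lies in `T`.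
Here `u` is the union of the sequence `s` iff the domain of `u` is the least upper bound
of the domains of the `s ξ` and every `s ξ` is a restriction of `u`. -/
def IsLtClosed (T : Set (PreFun κ)) : Prop :=
  ∀ (γ : K κ) (s : {ξ : K κ // ξ < γ} → PreFun κ),
    (∀ ξ ζ : {ξ : K κ // ξ < γ}, ξ < ζ → (s ξ).1 < (s ζ).1 ∧ cut κ (s ζ) (s ξ).1 = s ξ) →
    (∀ ξ, s ξ ∈ T) →
    ∀ u : PreFun κ, IsLUB (Set.range fun ξ => (s ξ).1) u.1 →
      (∀ ξ, cut κ u (s ξ).1 = s ξ) → u ∈ T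

/-- `T` contains a Cantor subtree. -/
def HasCantorSubtree (T : Set (PreFun κ)) : Prop :=
  ∃ (l : ℕ → K κ) (lam : K κ), StrictMono l ∧ IsLUB (Set.range l) lam ∧
    (level κ T lam).Nonempty ∧
    ∃ B ⊆ level κ T lam, ¬ B.Countable ∧
      ∀ n : ℕ, ((fun t => cut κ t (l n)) '' B).Countable

/-- proper end-extension on `^{<κ}κ`. -/
def pext (s t : PreFun κ) : Prop := s.1 < t.1 ∧ cut κ t s.1 = s

/-- A set `A ⊆ ^{<κ}κ`, regarded as a tree under proper end-extension, is trivially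
coherent: it is order-isomorphic to a subtree of `^{<λ}2` (for `λ` its height) all of
whose elements `t` satisfy that `t⁻¹{0}` is finite.  (Here the comparison tree is
realized as a subtree `U` of `^{<κ}κ` taking only the values `0` and `1`, i.e. values
with at most one predecessor, such that each `u ∈ U` takes the value `0`, i.e. the
value with no predecessor, only finitely often.) -/
def TriviallyCoherent (A : Set (PreFun κ)) : Prop :=
  ∃ U : Set (PreFun κ),
    IsSubtree κ U ∧
    (∀ u ∈ U, ∀ β : {b : K κ // b < u.1}, #{γ : K κ // γ < u.2 β} ≤ 1) ∧
    (∀ u ∈ U, {β : {b : K κ // b < u.1} | ¬ ∃ γ : K κ, γ < u.2 β}.Finite) ∧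
    ∃ f : A → U, Function.Bijective f ∧
      ∀ s t : A, pext κ s.1 t.1 ↔ pext κ (f s).1 (f t).1

/-- `T` is locally coherent: each of its proper initial segments `T ∩ ^{<α}κ` is
trivially coherent. -/
def LocallyCoherent (T : Set (PreFun κ)) : Prop :=
  ∀ α : K κ, TriviallyCoherent κ {s ∈ T | s.1 < α}

end GBaire

namespace GBaire

variable {κ : Cardinal.{u}}

theorem PreFun.ext' {s t : PreFun κ} (h1 : s.1 = t.1)
    (h2 : ∀ (β : K κ) (hs : β < s.1) (ht : β < t.1), s.2 ⟨β, hs⟩ = t.2 ⟨β, ht⟩) : s = t := by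
  obtain ⟨a, u⟩ := s
  obtain ⟨b, v⟩ := t
  dsimp at h1
  subst h1
  simp only [Sigma.mk.inj_iff, heq_eq_eq, true_and]
  funext β
  exact h2 β.1 β.2 β.2

theorem PreFun.apply_eq {s t : PreFun κ} (h : s = t) {β : K κ} (hs : β < s.1) (ht : β < t.1) :
    s.2 ⟨β, hs⟩ = t.2 ⟨β, ht⟩ := by
  subst h; rfl

theorem resT_eq_resT {x y : K κ → K κ} {α β : K κ} (h : resT κ x β = resT κ y β) (hab : α ≤ β) :
    resT κ x α = resT κ y α :=
  PreFun.ext' rfl fun γ hs _ =>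
    PreFun.apply_eq h (lt_of_lt_of_le hs hab) (lt_of_lt_of_le hs hab)

theorem cut_resT {x : K κ → K κ} {β γ : K κ} (h : γ ≤ β) :
    cut κ (resT κ x β) γ = resT κ x γ :=
  PreFun.ext' (min_eq_left h) fun δ hs ht => rfl

theorem cut_cut {u : PreFun κ} {β γ : K κ} (h : γ ≤ β) :
    cut κ (cut κ u β) γ = cut κ u γ :=
  PreFun.ext' (by
    show min γ (min β u.1) = min γ u.1
    rw [← min_assoc, min_eq_left h]) fun δ hs ht => rfl

theorem cut_self (s : PreFun κ) : cut κ s s.1 = s :=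
  PreFun.ext' (min_self _) fun δ hs ht => rfl

theorem mem_Nbhd_iff {x : K κ → K κ} {s : PreFun κ} : x ∈ Nbhd κ s ↔ resT κ x s.1 = s := Iff.rfl

theorem mem_Nbhd_resT (x : K κ → K κ) (α : K κ) : x ∈ Nbhd κ (resT κ x α) := rfl

theorem pext_trans {s t u : PreFun κ} (h1 : pext κ s t) (h2 : pext κ t u) : pext κ s u :=
  ⟨h1.1.trans h2.1, by rw [← cut_cut h1.1.le, h2.2, h1.2]⟩

theorem exists_bound (hreg : κ.IsRegular) {ι : Type u} (g : ι → K κ) (hι : #ι < κ) :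
    ∃ b : K κ, ∀ i, g i < b := by
  haveI : IsWellOrder (K κ) (· < ·) := @isWellOrder_lt _ _ _
  have hlim := Cardinal.isSuccLimit_ord hreg.aleph0_le
  have h1 : ∀ i, Order.succ (Ordinal.typein ((· < ·) : K κ → K κ → Prop) (g i)) < κ.ord :=
    fun i => hlim.succ_lt (Ordinal.typein_lt_self (g i))
  have h2 : (⨆ i, Order.succ (Ordinal.typein ((· < ·) : K κ → K κ → Prop) (g i))) < κ.ord :=
    Cardinal.iSup_lt_ord_of_isRegular hreg hι h1
  have h2' : (⨆ i, Order.succ (Ordinal.typein ((· < ·) : K κ → K κ → Prop) (g i)))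
      < Ordinal.type ((· < ·) : K κ → K κ → Prop) := by
    rwa [Ordinal.type_toType]
  refine ⟨Ordinal.enum ((· < ·) : K κ → K κ → Prop) ⟨_, h2'⟩, fun i => ?_⟩
  rw [← Ordinal.typein_lt_typein ((· < ·) : K κ → K κ → Prop), Ordinal.typein_enum]
  exact lt_of_lt_of_le (Order.lt_succ _) (Ordinal.le_iSup _ i)

theorem exists_basic (hne : Nonempty (K κ)) {U : Set (K κ → K κ)}
    (hU : TopologicalSpace.GenerateOpen {V | ∃ s : PreFun κ, V = Nbhd κ s} U) :
    ∀ x ∈ U, ∃ β : K κ, ∀ y, resT κ y β = resT κ x β → y ∈ U := by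
  induction hU with
  | basic V hV =>
      obtain ⟨s, rfl⟩ := hV
      intro x hx
      exact ⟨s.1, fun y hy => show resT κ y s.1 = s from hy.trans hx⟩
  | univ => exact fun x _ => ⟨Classical.choice hne, fun y _ => trivial⟩
  | inter V W _ _ ihV ihW =>
      intro x hx
      obtain ⟨b1, hb1⟩ := ihV x hx.1
      obtain ⟨b2, hb2⟩ := ihW x hx.2
      exact ⟨max b1 b2, fun y hy =>
        ⟨hb1 y (resT_eq_resT hy (le_max_left _ _)), hb2 y (resT_eq_resT hy (le_max_right _ _))⟩⟩
  | sUnion S _ ih =>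
      rintro x ⟨V, hVS, hxV⟩
      obtain ⟨b, hb⟩ := ih V hVS x hxV
      exact ⟨b, fun y hy => ⟨V, hVS, hb y hy⟩⟩


/-- If `κ` is an uncountable regular cardinal with `μ^ω ≥ κ` for some
cardinal `μ < κ` and `T` is a `κ`-Kurepa subtree of `^{<κ}κ` with `|[T]| > κ^{<κ}`, then
the set `[T]` is not a continuous image of `^κκ`. -/
theorem kurepa_not_continuous_image_of_countable_power
    (κ : Cardinal.{u}) (hκ : ℵ₀ < κ) (hreg : κ.IsRegular)
    (μ : Cardinal.{u}) (hμκ : μ < κ) (hpow : κ ≤ μ ^ ℵ₀)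
    (T : Set (PreFun κ)) (hT : IsKurepa κ T)
    (hbig : #(PreFun κ) < #(branches κ T)) :
    ¬ IsContImage κ (branches κ T) := by
  classical
  letI := baire κ
  rintro ⟨f, hf, hfs⟩
  obtain ⟨hsubT, hlevT, hbrT⟩ := hT
  have hκ0 : ℵ₀ ≤ κ := hκ.le
  have hne : Nonempty (K κ) := Ordinal.toType_nonempty_iff_ne_zero.2
    (by rw [Ne, Cardinal.ord_eq_zero]; exact fun h => (Cardinal.aleph0_pos.trans hκ).ne' h)
  have hmkK : #(K κ) = κ := by rw [mk_toType, Cardinal.card_ord]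
  set ν : Cardinal.{u} := #(PreFun κ) with hνdef
  have hκν : κ ≤ ν := by
    rw [← hmkK]
    exact Cardinal.mk_le_of_injective (f := fun α : K κ => (⟨α, fun β => β.1⟩ : PreFun κ))
      (fun a b h => congrArg Sigma.fst h)
  have hνinf : ℵ₀ ≤ ν := hκ0.trans hκν
  set F : (K κ → K κ) → K κ → K κ := fun x => (f x).1 with hFdef
  have hFmem : ∀ x, F x ∈ branches κ T := fun x => (f x).2
  set Bad : Set (K κ → K κ) :=
    ⋃ s : {s : PreFun κ // #(F '' Nbhd κ s) ≤ ν}, F '' Nbhd κ s.1 with hBaddef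
  have hBadle : #Bad ≤ ν := by
    refine le_trans (Cardinal.mk_iUnion_le _) ?_
    refine le_trans (mul_le_mul' (Cardinal.mk_subtype_le _) (ciSup_le' fun s => s.2)) ?_
    exact le_of_eq (Cardinal.mul_eq_self hνinf)
  have hBadmem : ∀ {s : PreFun κ} {x : K κ → K κ}, #(F '' Nbhd κ s) ≤ ν →
      x ∈ Nbhd κ s → F x ∈ Bad := by
    intro s x h1 h2
    exact Set.mem_iUnion.2 ⟨⟨s, h1⟩, ⟨x, h2, rfl⟩⟩
  -- there is a "big" node
  have hroot : ∃ s : PreFun κ, ν < #(F '' Nbhd κ s) := by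
    by_contra h
    push_neg at h
    have hsub' : branches κ T ⊆ Bad := by
      intro y hy
      obtain ⟨x, hx⟩ := hfs ⟨y, hy⟩
      have hxy : F x = y := congrArg Subtype.val hx
      rw [← hxy]
      exact hBadmem (h _) (mem_Nbhd_resT x (Classical.choice hne))
    exact absurd hbig (not_lt.2 (le_trans (Cardinal.mk_le_mk_of_subset hsub') hBadle))
  -- points outside Bad have all restrictions big
  have hGoodPre : ∀ {x : K κ → K κ}, F x ∉ Bad → ∀ β : K κ,
      ν < #(F '' Nbhd κ (resT κ x β)) := by
    intro x hx β
    by_contra hb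
    push_neg at hb
    exact hx (hBadmem hb (mem_Nbhd_resT x β))
  -- continuity in tree form
  have hcont : ∀ (x : K κ → K κ) (α : K κ), ∃ β : K κ,
      ∀ y, resT κ y β = resT κ x β → resT κ (F y) α = resT κ (F x) α := by
    intro x α
    have hNo : IsOpen (Nbhd κ (resT κ (F x) α)) :=
      TopologicalSpace.GenerateOpen.basic _ ⟨_, rfl⟩
    have hpre : IsOpen (f ⁻¹' (Subtype.val ⁻¹' Nbhd κ (resT κ (F x) α))) :=
      hf.isOpen_preimage _ (hNo.preimage continuous_subtype_val)
    have hxmem : x ∈ f ⁻¹' (Subtype.val ⁻¹' Nbhd κ (resT κ (F x) α)) :=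
      mem_Nbhd_resT (F x) α
    obtain ⟨β, hβ⟩ := exists_basic hne hpre x hxmem
    exact ⟨β, fun y hy => hβ y hy⟩
  -- index type of size μ
  set I : Type u := Quotient.out μ with hIdef
  have hI : #I = μ := Cardinal.mk_out μ
  -- the type of nodes of our scheme
  set D : Type u := {p : PreFun κ × PreFun κ //
    ν < #(F '' Nbhd κ p.1) ∧ ∀ x ∈ Nbhd κ p.1, resT κ (F x) p.2.1 = p.2} with hDdef
  -- root
  obtain ⟨s0, hs0⟩ := hroot
  obtain ⟨b0, hb0⟩ : ∃ b0 : K κ, ∀ a : K κ, ¬ a < b0 := by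
    have hwf : WellFounded ((· < ·) : K κ → K κ → Prop) := (wellFoundedLT_toType κ.ord).wf
    exact ⟨hwf.min Set.univ ⟨Classical.choice hne, trivial⟩,
      fun a => hwf.not_lt_min Set.univ (x := a) (Set.mem_univ a)⟩
  have root : D := ⟨(s0, ⟨b0, fun β => absurd β.2 (hb0 β.1)⟩), hs0,
    fun x _ => PreFun.ext' rfl fun γ hγ ht => absurd ht (hb0 γ)⟩
  -- the splitting step
  have hstep : ∀ d : D, ∃ ch : I → D,
      (∀ i, pext κ d.1.1 (ch i).1.1) ∧
      (∀ i j, i ≠ j → (ch i).1.2.1 = (ch j).1.2.1 ∧ (ch i).1.2 ≠ (ch j).1.2) := by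
    rintro ⟨⟨s, t⟩, hsbig, -⟩
    have hGood : ν < #((F '' Nbhd κ s) \ Bad : Set (K κ → K κ)) := by
      by_contra h
      push_neg at h
      have h2 : #(F '' Nbhd κ s) ≤ ν := by
        refine le_trans (Cardinal.mk_le_mk_of_subset
          (Set.subset_diff_union (F '' Nbhd κ s) Bad)) ?_
        refine le_trans (Cardinal.mk_union_le _ _) ?_
        refine le_trans (add_le_add h hBadle) ?_
        exact le_of_eq (Cardinal.add_eq_self hνinf)
      exact absurd hsbig (not_lt.2 h2)
    have hμle : (#I : Cardinal) ≤ #((F '' Nbhd κ s) \ Bad : Set (K κ → K κ)) := by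
      rw [hI]
      exact le_of_lt (lt_of_lt_of_le hμκ (le_trans hκν (le_of_lt hGood)))
    obtain ⟨yemb⟩ := Cardinal.le_def _ _ |>.1 hμle
    have hyG : ∀ i : I, ((yemb i : K κ → K κ) ∈ F '' Nbhd κ s ∧ (yemb i : K κ → K κ) ∉ Bad) :=
      fun i => (yemb i).2
    choose xx hxxN hxxF using fun i => (hyG i).1
    have hbigres : ∀ (i : I) (β : K κ), ν < #(F '' Nbhd κ (resT κ (xx i) β)) := by
      intro i β
      apply hGoodPre _ β
      rw [hxxF i]
      exact (hyG i).2
    have hyne : ∀ i j : I, i ≠ j → ∃ γ : K κ, (yemb i : K κ → K κ) γ ≠ (yemb j : K κ → K κ) γ := by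
      intro i j hij
      by_contra h
      push_neg at h
      exact hij (yemb.injective (Subtype.ext (funext h)))
    set gdif : I × I → K κ := fun p =>
      if h : ∃ γ : K κ, (yemb p.1 : K κ → K κ) γ ≠ (yemb p.2 : K κ → K κ) γ then h.choose
      else Classical.choice hne with hgdif
    obtain ⟨α, hα⟩ := exists_bound hreg gdif (by
      simp only [Cardinal.mk_prod, Cardinal.lift_id, hI]
      exact Cardinal.mul_lt_of_lt hκ0 hμκ hμκ)
    choose bb hbb using fun i => hcont (xx i) α
    set gopt : Option I → K κ := fun o => o.elim s.1 bb with hgopt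
    obtain ⟨B2, hB2⟩ := exists_bound hreg gopt (by
      rw [Cardinal.mk_option, hI]
      exact Cardinal.add_lt_of_lt hκ0 hμκ (Cardinal.one_lt_aleph0.trans hκ))
    have hsB2 : s.1 < B2 := hB2 none
    have hbbB2 : ∀ i : I, bb i < B2 := fun i => hB2 (some i)
    refine ⟨fun i => ⟨(resT κ (xx i) B2, resT κ (yemb i) α), hbigres i B2, ?_⟩, ?_, ?_⟩
    · intro z hz
      have h1 : resT κ z B2 = resT κ (xx i) B2 := hz
      have h2 : resT κ z (bb i) = resT κ (xx i) (bb i) := resT_eq_resT h1 (hbbB2 i).le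
      have h3 := hbb i z h2
      rw [hxxF i] at h3
      exact h3
    · intro i
      exact ⟨hsB2, (cut_resT hsB2.le).trans (hxxN i)⟩
    · intro i j hij
      refine ⟨rfl, fun he => ?_⟩
      have hex := hyne i j hij
      have hc : gdif (i, j) < α := hα (i, j)
      rw [show gdif (i, j) = hex.choose from dif_pos hex] at hc
      exact hex.choose_spec (PreFun.apply_eq he hc hc)
  choose step hstep1 hstep2 using hstep
  set G : List I → D := fun l => List.rec root (fun i _ ih => step ih i) l with hGdef
  -- prefix lists
  set L : (ℕ → I) → ℕ → List I := fun c => fun n => Nat.rec [] (fun m ih => c m :: ih) n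
    with hLdef
  set S : (ℕ → I) → ℕ → PreFun κ := fun c n => (G (L c n)).1.1 with hSdef
  have hSpext : ∀ (c : ℕ → I) (n : ℕ), pext κ (S c n) (S c (n + 1)) :=
    fun c n => hstep1 (G (L c n)) (c n)
  have hSchain : ∀ (c : ℕ → I) (m n : ℕ), m < n → pext κ (S c m) (S c n) := by
    intro c m n h
    induction n with
    | zero => exact absurd h (Nat.not_lt_zero m)
    | succ n ih =>
      rcases Nat.lt_succ_iff_lt_or_eq.1 h with h' | h'
      · exact pext_trans (ih h') (hSpext c n)
      · rw [h']; exact hSpext c n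
  have hScut : ∀ (c : ℕ → I) (m n : ℕ), m ≤ n → cut κ (S c n) (S c m).1 = S c m := by
    intro c m n h
    rcases eq_or_lt_of_le h with rfl | h'
    · exact cut_self _
    · exact (hSchain c m n h').2
  have hScoh : ∀ (c : ℕ → I) (m n : ℕ) (γ : K κ) (hm : γ < (S c m).1) (hn : γ < (S c n).1),
      (S c m).2 ⟨γ, hm⟩ = (S c n).2 ⟨γ, hn⟩ := by
    intro c m n γ hm hn
    rcases le_total m n with h | h
    · exact (PreFun.apply_eq (hScut c m n h) (lt_min hm hn) hm).symm
    · exact PreFun.apply_eq (hScut c n m h) (lt_min hn hm) hn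
  -- the limit points
  set xc : (ℕ → I) → K κ → K κ := fun c γ =>
    if h : ∃ n, γ < (S c n).1 then (S c h.choose).2 ⟨γ, h.choose_spec⟩ else γ with hxcdef
  have hxc : ∀ (c : ℕ → I) (n : ℕ), resT κ (xc c) (S c n).1 = S c n := by
    intro c n
    refine PreFun.ext' rfl ?_
    intro γ hγ hγ'
    show xc c γ = (S c n).2 ⟨γ, hγ'⟩
    have h : ∃ m, γ < (S c m).1 := ⟨n, hγ'⟩
    show (if h' : ∃ m, γ < (S c m).1 then (S c h'.choose).2 ⟨γ, h'.choose_spec⟩ else γ)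
      = (S c n).2 ⟨γ, hγ'⟩
    rw [dif_pos h]
    exact hScoh c h.choose n γ h.choose_spec hγ'
  have hxcN : ∀ (c : ℕ → I) (n : ℕ), xc c ∈ Nbhd κ (S c n) := fun c n => hxc c n
  have hFt : ∀ (c : ℕ → I) (n : ℕ),
      resT κ (F (xc c)) ((G (L c n)).1.2).1 = (G (L c n)).1.2 :=
    fun c n => (G (L c n)).2.2 (xc c) (hxcN c n)
  -- a bound for all the t-domains
  obtain ⟨B, hB⟩ := exists_bound hreg (fun l : List I => ((G l).1.2).1) (by
    refine lt_of_le_of_lt (Cardinal.mk_list_le_max I) (max_lt hκ ?_)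
    rw [hI]; exact hμκ)
  -- the injection into the B-th level
  have hTlevel : ∀ c : ℕ → I, resT κ (F (xc c)) B ∈ level κ T B :=
    fun c => ⟨hFmem (xc c) B, rfl⟩
  have hinj : Function.Injective
      (fun c : ℕ → I => (⟨resT κ (F (xc c)) B, hTlevel c⟩ : level κ T B)) := by
    intro c c' he
    by_contra hne'
    have hex : ∃ n, c n ≠ c' n := by
      by_contra h
      push_neg at h
      exact hne' (funext h)
    set n := Nat.find hex with hn_def
    have hn : c n ≠ c' n := Nat.find_spec hex
    have hL : L c n = L c' n := by
      have key : ∀ m : ℕ, (∀ k, k < m → c k = c' k) → L c m = L c' m := by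
        intro m
        induction m with
        | zero => intro _; rfl
        | succ m ih =>
          intro h
          show c m :: L c m = c' m :: L c' m
          rw [h m (Nat.lt_succ_self m), ih fun k hk => h k (Nat.lt_succ_of_lt hk)]
      exact key n fun k hk => not_not.1 (Nat.find_min hex hk)
    have hd := hstep2 (G (L c n)) (c n) (c' n) hn
    have h1 : resT κ (F (xc c)) ((step (G (L c n)) (c n)).1.2).1
        = (step (G (L c n)) (c n)).1.2 := hFt c (n + 1)
    have h2 : resT κ (F (xc c')) ((step (G (L c n)) (c' n)).1.2).1
        = (step (G (L c n)) (c' n)).1.2 := by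
      have h2' := hFt c' (n + 1)
      rw [show L c' (n + 1) = c' n :: L c n from by rw [show L c' (n+1) = c' n :: L c' n from rfl, hL]] at h2'
      exact h2'
    have hvB : resT κ (F (xc c)) B = resT κ (F (xc c')) B := congrArg Subtype.val he
    have ht1B : ((step (G (L c n)) (c n)).1.2).1 < B := hB (L c (n + 1))
    apply hd.2
    calc (step (G (L c n)) (c n)).1.2
        = resT κ (F (xc c)) ((step (G (L c n)) (c n)).1.2).1 := h1.symm
      _ = resT κ (F (xc c')) ((step (G (L c n)) (c n)).1.2).1 := resT_eq_resT hvB ht1B.le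
      _ = resT κ (F (xc c')) ((step (G (L c n)) (c' n)).1.2).1 := by rw [hd.1]
      _ = (step (G (L c n)) (c' n)).1.2 := h2
  -- contradiction with the smallness of the levels
  have hinj2 : Function.Injective (fun (g : ULift.{u} ℕ → I) (n : ℕ) => g ⟨n⟩) := by
    intro g g' h
    funext u
    exact congrFun h u.down
  have hfin : κ ≤ #(level κ T B) :=
    calc κ ≤ μ ^ ℵ₀ := hpow
      _ = #I ^ #(ULift.{u} ℕ) := by
          rw [hI, Cardinal.mk_uLift, Cardinal.mk_nat, Cardinal.lift_aleph0]
      _ = #(ULift.{u} ℕ → I) := Cardinal.power_def I (ULift.{u} ℕ)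
      _ ≤ #(level κ T B) := Cardinal.mk_le_of_injective (hinj.comp hinj2)
  exact absurd hfin (not_le.2 (hlevT B).2)


end GBaire
end
end

section
/- Let κ be an uncountable regular cardinal and let p : κ × κ → κ be a bijection. For x ∈ ^κ2 let <_x be the binary relation on κ defined by: α <_x β if and only if x(p(α, β)) = 1. Then the set W = {x ∈ ^κ2 : <_x is a well-ordering of κ} is a closed subset of the generalized Baire space ^κκ. -/
open Cardinal Set

noncomputable section

namespace GBaire

universe v

lemma mem_nbhd_res_iff (κ : Cardinal.{v}) (x y : K κ → K κ) (α : K κ) :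
    y ∈ Nbhd κ (resT κ x α) ↔ ∀ β : K κ, β < α → y β = x β := by
  show resT κ y α = resT κ x α ↔ _
  constructor
  · intro h β hβ
    exact congrFun (eq_of_heq (Sigma.ext_iff.1 h).2) ⟨β, hβ⟩
  · intro h
    exact Sigma.ext rfl (heq_of_eq (funext fun β => h β.1 β.2))

lemma open_of_local (κ : Cardinal.{v}) (U : Set (K κ → K κ))
    (h : ∀ x ∈ U, ∃ s : PreFun κ, x ∈ Nbhd κ s ∧ Nbhd κ s ⊆ U) :
    @IsOpen _ (baire κ) U := by
  have hU : U = ⋃₀ {V | (∃ s, V = Nbhd κ s) ∧ V ⊆ U} := by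
    ext x
    constructor
    · intro hx
      obtain ⟨s, hxs, hs⟩ := h x hx
      exact ⟨Nbhd κ s, ⟨⟨s, rfl⟩, hs⟩, hxs⟩
    · rintro ⟨V, ⟨_, hVU⟩, hxV⟩
      exact hVU hxV
  rw [hU]
  exact TopologicalSpace.GenerateOpen.sUnion _
    (fun V hV => TopologicalSpace.GenerateOpen.basic V hV.1)

lemma exists_bound_s5 (κ : Cardinal.{v}) (hκ : ℵ₀ < κ) (hreg : κ.IsRegular) (f : ℕ → K κ) :
    ∃ α : K κ, ∀ n, f n < α := by
  set e := Ordinal.ToType.mk (o := κ.ord)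
  have hb : Ordinal.lsub (fun n : ULift.{v} ℕ => ((e.symm (f n.down)) : Ordinal)) < κ.ord := by
    apply Ordinal.lsub_lt_ord
    · rw [hreg.cof_eq]; simpa using hκ
    · exact fun n => (e.symm (f n.down)).2
  refine ⟨e ⟨_, hb⟩, fun n => ?_⟩
  have : e.symm (f n) < ⟨_, hb⟩ := by
    show ((e.symm (f n)) : Ordinal) < _
    exact Ordinal.lt_lsub _ (ULift.up n)
  have := e.lt_iff_lt.2 this
  simpa using this

/-- Let `κ` be an uncountable regular cardinal, let `p : κ × κ → κ` be
a bijection and let `one` be the element `1` of `κ` (the unique element with exactly one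
predecessor).  Then the set `W` of all binary-valued `x ∈ ^κ2 ⊆ ^κκ` such that the
relation `α <_x β ↔ x (p (α, β)) = 1` is a well-ordering of `κ` is closed in `^κκ`. -/
theorem wellorder_codes_closed
    (κ : Cardinal.{u}) (hκ : ℵ₀ < κ) (hreg : κ.IsRegular)
    (p : K κ × K κ → K κ) (hp : Function.Bijective p)
    (one : K κ) (hone : #{γ : K κ // γ < one} = 1) :
    @IsClosed _ (baire κ)
      {x : K κ → K κ |
        (∀ α : K κ, #{γ : K κ // γ < x α} ≤ 1) ∧
        IsWellOrder (K κ) (fun α β => x (p (α, β)) = one)} := by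
  letI := baire κ
  set W : Set (K κ → K κ) := {x : K κ → K κ |
        (∀ α : K κ, #{γ : K κ // γ < x α} ≤ 1) ∧
        IsWellOrder (K κ) (fun α β => x (p (α, β)) = one)} with hW
  rw [← isOpen_compl_iff]
  apply open_of_local
  intro x hx
  suffices h : ∃ f : ℕ → K κ, ∀ y : K κ → K κ, (∀ n, y (f n) = x (f n)) → y ∉ W by
    obtain ⟨f, hf⟩ := h
    obtain ⟨α, hα⟩ := exists_bound_s5 κ hκ hreg f
    refine ⟨resT κ x α, (mem_nbhd_res_iff κ x x α).2 fun _ _ => rfl, ?_⟩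
    intro y hy
    have hagree := (mem_nbhd_res_iff κ x y α).1 hy
    exact hf y (fun n => hagree (f n) (hα n))
  by_cases hA : ∀ α : K κ, #{γ : K κ // γ < x α} ≤ 1
  · have hB : ¬ IsWellOrder (K κ) (fun α β => x (p (α, β)) = one) := fun h =>
      hx ⟨hA, h⟩
    set r : K κ → K κ → Prop := fun α β => x (p (α, β)) = one with hr
    by_cases htri : ∀ a b : K κ, r a b ∨ a = b ∨ r b a
    · by_cases htrans : ∀ a b c : K κ, r a b → r b c → r a c
      · by_cases hirr : ∀ a : K κ, ¬ r a a
        · by_cases hwf : WellFounded r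
          · exfalso
            haveI : IsTrichotomous (K κ) r := ⟨fun a b h1 h2 => ((htri a b).resolve_left h1).resolve_right h2⟩
            haveI : IsTrans (K κ) r := ⟨htrans⟩
            haveI : IsWellFounded (K κ) r := ⟨hwf⟩
            exact hB ⟨⟩
          · -- not well-founded: get a descending sequence
            haveI : IsTrans (K κ) r := ⟨htrans⟩
            haveI : IsIrrefl (K κ) r := ⟨hirr⟩
            haveI : IsStrictOrder (K κ) r := ⟨⟩
            have hne : ¬ IsEmpty ((fun x1 x2 => x1 > x2) ↪r r) := fun h =>
              hwf (RelEmbedding.wellFounded_iff_isEmpty.2 h)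
            obtain ⟨g⟩ := not_isEmpty_iff.1 hne
            refine ⟨fun n => p (g (n + 1), g n), fun y hy hyW => ?_⟩
            set ry : K κ → K κ → Prop := fun α β => y (p (α, β)) = one with hry
            have hdesc : ∀ n : ℕ, ry (g (n + 1)) (g n) := by
              intro n
              show y (p (g (n + 1), g n)) = one
              rw [hy n]
              exact g.map_rel_iff.2 (Nat.lt_succ_self n)
            haveI hwo : IsWellOrder (K κ) ry := hyW.2
            haveI : IsStrictOrder (K κ) ry := inferInstance
            exact (RelEmbedding.wellFounded_iff_isEmpty.1
              hwo.toIsWellFounded.wf).false (RelEmbedding.natGT g hdesc)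
        · push_neg at hirr
          obtain ⟨a, ha⟩ := hirr
          refine ⟨fun _ => p (a, a), fun y hy hyW => ?_⟩
          have hya : y (p (a, a)) = one := by rw [hy 0]; exact ha
          haveI hwo : IsWellOrder (K κ) (fun α β => y (p (α, β)) = one) := hyW.2
          exact absurd hya (irrefl_of (fun α β => y (p (α, β)) = one) a)
      · push_neg at htrans
        obtain ⟨a, b, c, hab, hbc, hac⟩ := htrans
        refine ⟨fun n => if n = 0 then p (a, b) else if n = 1 then p (b, c)
          else p (a, c), fun y hy hyW => ?_⟩
        have h0 := hy 0; have h1 := hy 1; have h2 := hy 2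
        norm_num at h0 h1 h2
        haveI hwo : IsWellOrder (K κ) (fun α β => y (p (α, β)) = one) := hyW.2
        apply hac
        show x (p (a, c)) = one
        have hyab : y (p (a, b)) = one := by rw [h0]; exact hab
        have hybc : y (p (b, c)) = one := by rw [h1]; exact hbc
        have hyac : y (p (a, c)) = one :=
          trans_of (fun α β => y (p (α, β)) = one) hyab hybc
        rw [← h2]; exact hyac
    · push_neg at htri
      obtain ⟨a, b, hab, hne, hba⟩ := htri
      refine ⟨fun n => if n = 0 then p (a, b) else p (b, a), fun y hy hyW => ?_⟩
      have h0 := hy 0; have h1 := hy 1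
      norm_num at h0 h1
      haveI hwo : IsWellOrder (K κ) (fun α β => y (p (α, β)) = one) := hyW.2
      rcases trichotomous_of (fun α β => y (p (α, β)) = one) a b with h | h | h
      · exact hab (show x (p (a, b)) = one by rw [← h0]; exact h)
      · exact hne h
      · exact hba (show x (p (b, a)) = one by rw [← h1]; exact h)
  · push_neg at hA
    obtain ⟨a, ha⟩ := hA
    refine ⟨fun _ => a, fun y hy hyW => ?_⟩
    have := hyW.1 a
    rw [hy 0] at this
    exact absurd this (not_le.2 ha)
end GBaire
end
end
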